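/- Let x ∈ ℝ^m have all entries equal to ±1/√m, and let v_x ∈ ℝ^{m³} be the tensor with entries (v_x)_{(i,j,k)} = x_i x_j x_k. Then v_x lies in a fixed subspace of ℝ^{m³} (independent of x) of dimension at most m + C(m,3) = m(m² - 3m + 8)/6. -/

import Mathlib

open Finset in
theorem stmt_5 (m : ℕ)
    (v : EuclideanSpace ℝ (Fin m) → EuclideanSpace ℝ (Fin m × Fin m × Fin m))
    (hv : ∀ x, ∀ p : Fin m × Fin m × Fin m,
      v x p = x p.1 * x p.2.1 * x p.2.2) :
    ∃ W : Submodule ℝ (EuclideanSpace ℝ (Fin m × Fin m × Fin m)),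
      Module.finrank ℝ W ≤ m + Nat.choose m 3 ∧
      (Module.finrank ℝ W : ℝ) ≤ m * (m ^ 2 - 3 * m + 8) / 6 ∧
      ∀ x : EuclideanSpace ℝ (Fin m),
        (∀ i, x i = 1 / Real.sqrt m ∨ x i = -(1 / Real.sqrt m)) → v x ∈ W := by
  classical
  -- the "diagonal" vectors
  set A : Fin m → EuclideanSpace ℝ (Fin m × Fin m × Fin m) := fun i =>
    WithLp.toLp 2 (fun p : Fin m × Fin m × Fin m => if (p.1 = p.2.1 ∧ p.2.2 = i) ∨ (p.1 = p.2.2 ∧ p.2.1 = i) ∨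
        (p.2.1 = p.2.2 ∧ p.1 = i) then (1 : ℝ) else 0) with hA
  -- the "off-diagonal" symmetrized vectors
  set B : Finset (Fin m) → EuclideanSpace ℝ (Fin m × Fin m × Fin m) := fun s =>
    WithLp.toLp 2 (fun p : Fin m × Fin m × Fin m => if ({p.1, p.2.1, p.2.2} : Finset (Fin m)) = s then (1 : ℝ) else 0) with hB
  set f : (Fin m ⊕ {s : Finset (Fin m) // s.card = 3}) →
      EuclideanSpace ℝ (Fin m × Fin m × Fin m) :=
    Sum.elim A (fun s => B s.1) with hf
  have h1 : Module.finrank ℝ (Submodule.span ℝ (Set.range f)) ≤ m + Nat.choose m 3 := by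
    calc Module.finrank ℝ (Submodule.span ℝ (Set.range f)) ≤
        Fintype.card (Fin m ⊕ {s : Finset (Fin m) // s.card = 3}) :=
          finrank_range_le_card f
      _ = m + Nat.choose m 3 := by simp
  refine ⟨Submodule.span ℝ (Set.range f), h1, ?_, ?_⟩
  · have h2 : ((m + Nat.choose m 3 : ℕ) : ℝ) ≤ m * (m ^ 2 - 3 * m + 8) / 6 := by
      rcases Nat.lt_or_ge m 2 with hm | hm
      · interval_cases m <;> norm_num [Nat.choose]
      · obtain ⟨n, rfl⟩ := Nat.exists_eq_add_of_le hm
        have hd : 6 * Nat.choose (2 + n) 3 = (2 + n).descFactorial 3 := by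
          rw [Nat.descFactorial_eq_factorial_mul_choose]
          norm_num [Nat.factorial]
        have hdf : (2 + n).descFactorial 3 = (2 + n - 2) * ((2 + n - 1) * (2 + n)) := by
          simp [Nat.descFactorial]
        have e1 : 2 + n - 2 = n := by omega
        have e2 : 2 + n - 1 = n + 1 := by omega
        rw [e1, e2] at hdf
        have hkey : 6 * Nat.choose (2 + n) 3 = n * ((n + 1) * (2 + n)) := by
          rw [hd, hdf]
        have hcast : 6 * (Nat.choose (2 + n) 3 : ℝ) = n * ((n + 1) * (2 + n)) := by
          exact_mod_cast congrArg (Nat.cast : ℕ → ℝ) hkey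
        push_cast
        push_cast at hcast
        nlinarith [hcast]
    calc (Module.finrank ℝ (Submodule.span ℝ (Set.range f)) : ℝ) ≤
        ((m + Nat.choose m 3 : ℕ) : ℝ) := by exact_mod_cast h1
      _ ≤ m * (m ^ 2 - 3 * m + 8) / 6 := h2
  · intro x hx
    have hm0 : ∀ i : Fin m, x i * x i = 1 / m := by
      intro i
      have hmpos : (0 : ℝ) < m := by
        have : 0 < m := i.pos
        exact_mod_cast this
      have hs : Real.sqrt m * Real.sqrt m = m := Real.mul_self_sqrt (le_of_lt hmpos)
      rcases hx i with h | h <;> rw [h] <;> field_simp <;> nlinarith [hs]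
    have key : v x = (∑ i, (x i / m) • A i) +
        ∑ s ∈ Finset.univ.filter (fun s : Finset (Fin m) => s.card = 3),
          (∏ j ∈ s, x j) • B s := by
      ext p
      obtain ⟨a, b, c⟩ := p
      have happ : ((∑ i, (x i / m) • A i) +
          ∑ s ∈ Finset.univ.filter (fun s : Finset (Fin m) => s.card = 3),
            (∏ j ∈ s, x j) • B s) (a, b, c)
          = (∑ i, (x i / m) * A i (a, b, c)) +
            ∑ s ∈ Finset.univ.filter (fun s : Finset (Fin m) => s.card = 3),
              (∏ j ∈ s, x j) * B s (a, b, c) := by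
        show (∑ i, (x i / m) • A i) (a, b, c) +
            (∑ s ∈ Finset.univ.filter (fun s : Finset (Fin m) => s.card = 3),
              (∏ j ∈ s, x j) • B s) (a, b, c) = _
        rw [WithLp.ofLp_sum, WithLp.ofLp_sum, Finset.sum_apply, Finset.sum_apply]
        rfl
      rw [hv, happ]
      by_cases hab : a = b
      · -- a = b : only the A-part contributes
        subst hab
        have hBzero : ∀ s ∈ Finset.univ.filter (fun s : Finset (Fin m) => s.card = 3),
            (∏ j ∈ s, x j) * B s (a, a, c) = 0 := by
          intro s hs
          simp only [Finset.mem_filter] at hs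
          have hsub : ({a, a, c} : Finset (Fin m)) ⊆ {a, c} := by
            intro y hy; simp at hy ⊢; tauto
          have hcard : ({a, a, c} : Finset (Fin m)).card ≤ 2 :=
            (Finset.card_le_card hsub).trans ((Finset.card_insert_le _ _).trans (by simp))
          have hne : ({a, a, c} : Finset (Fin m)) ≠ s := by
            intro h; rw [h, hs.2] at hcard; omega
          show (∏ j ∈ s, x j) * (if ({a, a, c} : Finset (Fin m)) = s then (1:ℝ) else 0) = 0
          rw [if_neg hne, mul_zero]
        rw [Finset.sum_eq_zero hBzero, add_zero]
        have hAval : ∀ i, A i (a, a, c) = if i = c then (1:ℝ) else 0 := by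
          intro i
          simp only [hA, PiLp.toLp_apply]
          by_cases hic : i = c
          · subst hic
            simp
          · rw [if_neg hic, if_neg]
            rintro (⟨-, rfl⟩ | ⟨rfl, rfl⟩ | ⟨rfl, rfl⟩) <;> exact hic rfl
        calc x a * x a * x c = x c / m := by linear_combination x c * hm0 a
          _ = ∑ i, x i / ↑m * A i (a, a, c) := by
            rw [Finset.sum_congr rfl (fun i _ => by rw [hAval i])]
            simp only [mul_ite, mul_one, mul_zero]
            rw [Finset.sum_ite_eq' Finset.univ c (fun i => x i / (m:ℝ))]
            simp
      · by_cases hac : a = c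
        · -- a = c ≠ b
          subst hac
          have hBzero : ∀ s ∈ Finset.univ.filter (fun s : Finset (Fin m) => s.card = 3),
              (∏ j ∈ s, x j) * B s (a, b, a) = 0 := by
            intro s hs
            simp only [Finset.mem_filter] at hs
            have hsub : ({a, b, a} : Finset (Fin m)) ⊆ {a, b} := by
              intro y hy; simp at hy ⊢; tauto
            have hcard : ({a, b, a} : Finset (Fin m)).card ≤ 2 :=
              (Finset.card_le_card hsub).trans ((Finset.card_insert_le _ _).trans (by simp))
            have hne : ({a, b, a} : Finset (Fin m)) ≠ s := by
              intro h; rw [h, hs.2] at hcard; omega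
            show (∏ j ∈ s, x j) * (if ({a, b, a} : Finset (Fin m)) = s then (1:ℝ) else 0) = 0
            rw [if_neg hne, mul_zero]
          rw [Finset.sum_eq_zero hBzero, add_zero]
          have hAval : ∀ i, A i (a, b, a) = if i = b then (1:ℝ) else 0 := by
            intro i
            simp only [hA, PiLp.toLp_apply]
            by_cases hib : i = b
            · subst hib
              simp
            · rw [if_neg hib, if_neg]
              rintro (⟨rfl, rfl⟩ | ⟨-, rfl⟩ | ⟨rfl, rfl⟩) <;>
                first | exact hab rfl | exact hib rfl
          calc x a * x b * x a = x b / m := by linear_combination x b * hm0 a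
            _ = ∑ i, x i / ↑m * A i (a, b, a) := by
              rw [Finset.sum_congr rfl (fun i _ => by rw [hAval i])]
              simp only [mul_ite, mul_one, mul_zero]
              rw [Finset.sum_ite_eq' Finset.univ b (fun i => x i / (m:ℝ))]
              simp
        · by_cases hbc : b = c
          · -- b = c ≠ a
            subst hbc
            have hBzero : ∀ s ∈ Finset.univ.filter (fun s : Finset (Fin m) => s.card = 3),
                (∏ j ∈ s, x j) * B s (a, b, b) = 0 := by
              intro s hs
              simp only [Finset.mem_filter] at hs
              have hsub : ({a, b, b} : Finset (Fin m)) ⊆ {a, b} := by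
                intro y hy; simp at hy ⊢; tauto
              have hcard : ({a, b, b} : Finset (Fin m)).card ≤ 2 :=
                (Finset.card_le_card hsub).trans ((Finset.card_insert_le _ _).trans (by simp))
              have hne : ({a, b, b} : Finset (Fin m)) ≠ s := by
                intro h; rw [h, hs.2] at hcard; omega
              show (∏ j ∈ s, x j) * (if ({a, b, b} : Finset (Fin m)) = s then (1:ℝ) else 0) = 0
              rw [if_neg hne, mul_zero]
            rw [Finset.sum_eq_zero hBzero, add_zero]
            have hAval : ∀ i, A i (a, b, b) = if i = a then (1:ℝ) else 0 := by
              intro i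
              simp only [hA, PiLp.toLp_apply]
              by_cases hia : i = a
              · subst hia
                simp
              · rw [if_neg hia, if_neg]
                rintro (⟨rfl, rfl⟩ | ⟨rfl, rfl⟩ | ⟨-, rfl⟩) <;>
                  first | exact hab rfl | exact hia rfl
            calc x a * x b * x b = x a / m := by linear_combination x a * hm0 b
              _ = ∑ i, x i / ↑m * A i (a, b, b) := by
                rw [Finset.sum_congr rfl (fun i _ => by rw [hAval i])]
                simp only [mul_ite, mul_one, mul_zero]
                rw [Finset.sum_ite_eq' Finset.univ a (fun i => x i / (m:ℝ))]
                simp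
          · -- all distinct: only the B-part contributes
            have hAzero : ∀ i, x i / (m:ℝ) * A i (a, b, c) = 0 := by
              intro i
              simp [hA, hab, hac, hbc]
            rw [Finset.sum_eq_zero (fun i _ => hAzero i), zero_add]
            have hcard : ({a, b, c} : Finset (Fin m)).card = 3 := by
              rw [Finset.card_insert_of_notMem (by simp [hab, hac]),
                Finset.card_insert_of_notMem (by simp [hbc]), Finset.card_singleton]
            have hBval : ∀ s, B s (a, b, c) = if s = ({a, b, c} : Finset (Fin m)) then (1:ℝ)
                else 0 := by
              intro s
              simp only [hB, PiLp.toLp_apply, eq_comm]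
            rw [Finset.sum_congr rfl (fun s _ => by rw [hBval s])]
            simp only [mul_ite, mul_one, mul_zero]
            rw [Finset.sum_ite_eq' (Finset.univ.filter (fun s : Finset (Fin m) => s.card = 3))
              ({a, b, c} : Finset (Fin m)) (fun s => (∏ j ∈ s, x j))]
            have hmem : ({a, b, c} : Finset (Fin m)) ∈
                Finset.univ.filter (fun s : Finset (Fin m) => s.card = 3) := by
              simp [hcard]
            rw [if_pos hmem]
            rw [Finset.prod_insert (by simp [hab, hac]), Finset.prod_insert (by simp [hbc]),
              Finset.prod_singleton]
            ring
    rw [key]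
    refine Submodule.add_mem _ ?_ ?_
    · refine Submodule.sum_mem _ fun i _ => Submodule.smul_mem _ _ ?_
      exact Submodule.subset_span ⟨Sum.inl i, rfl⟩
    · refine Submodule.sum_mem _ fun s hs => Submodule.smul_mem _ _ ?_
      simp only [Finset.mem_filter] at hs
      exact Submodule.subset_span ⟨Sum.inr ⟨s, hs.2⟩, rfl⟩
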